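/- For every η ≥ 0, every α ∈ ℝ, and every linear subspace L ⊆ ℝ^n, with p the orthogonal projection of w(η) onto L and q := w(η) − p, the updated vectors x(α)_j := x_j + α√(x_j/s_j)·p_j and s(α)_j := s_j + α√(s_j/x_j)·q_j satisfy ∑_{j=1}^n x(α)_j s(α)_j = (1−α)·n·μ. -/

import Mathlib

theorem stmt_11 (n : ℕ) (hn : 1 ≤ n) (x s : Fin n → ℝ)
    (hx : ∀ j, 0 < x j) (hs : ∀ j, 0 < s j)
    (μ : ℝ) (hμ : μ = (∑ j, x j * s j) / n)
    (v u : Fin n → ℝ)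
    (hv : ∀ j, v j = Real.sqrt (x j * s j))
    (hu : ∀ j, u j = x j * s j / μ)
    (δ : ℝ) (hδ : δ = (1 / (n : ℝ)) * ∑ j, u j * Real.log (u j))
    (η : ℝ) (hη : 0 ≤ η)
    (w : Fin n → ℝ)
    (hw : ∀ j, w j = -v j + η * (δ * v j - v j * Real.log (u j)))
    (L : Submodule ℝ (Fin n → ℝ)) (p q : Fin n → ℝ)
    (hpL : p ∈ L) (hperp : ∀ y ∈ L, ∑ j, (w j - p j) * y j = 0)
    (hq : ∀ j, q j = w j - p j)
    (α : ℝ) (xα sα : Fin n → ℝ)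
    (hxα : ∀ j, xα j = x j + α * Real.sqrt (x j / s j) * p j)
    (hsα : ∀ j, sα j = s j + α * Real.sqrt (s j / x j) * q j) :
    ∑ j, xα j * sα j = (1 - α) * n * μ := by
  have hn0 : (0:ℝ) < n := by exact_mod_cast Nat.lt_of_lt_of_le Nat.zero_lt_one hn
  have hne : Nonempty (Fin n) := Fin.pos_iff_nonempty.mp (by omega)
  have hSpos : 0 < ∑ j, x j * s j :=
    Finset.sum_pos (fun j _ => mul_pos (hx j) (hs j)) Finset.univ_nonempty
  have hμ0 : 0 < μ := by rw [hμ]; positivity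
  have hS : ∑ j, x j * s j = n * μ := by rw [hμ]; field_simp
  have hvsq : ∀ j, v j * v j = x j * s j := fun j => by
    rw [hv]; exact Real.mul_self_sqrt (mul_pos (hx j) (hs j)).le
  have ha : ∀ j, Real.sqrt (x j / s j) * s j = v j := fun j => by
    rw [hv, show x j * s j = (x j / s j) * s j ^ 2 by have h := (hs j).ne'; field_simp,
      Real.sqrt_mul (div_nonneg (hx j).le (hs j).le), Real.sqrt_sq (hs j).le]
  have hb : ∀ j, Real.sqrt (s j / x j) * x j = v j := fun j => by
    rw [hv, show x j * s j = (s j / x j) * x j ^ 2 by have h := (hx j).ne'; field_simp,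
      Real.sqrt_mul (div_nonneg (hs j).le (hx j).le), Real.sqrt_sq (hx j).le]
  have hab : ∀ j, Real.sqrt (x j / s j) * Real.sqrt (s j / x j) = 1 := fun j => by
    rw [← Real.sqrt_mul (div_nonneg (hx j).le (hs j).le)]
    have : x j / s j * (s j / x j) = 1 := by
      have h1 := (hs j).ne'; have h2 := (hx j).ne'; field_simp
    rw [this, Real.sqrt_one]
  have key : ∀ j, xα j * sα j = x j * s j + α * (v j * w j) + α^2 * (p j * q j) := by
    intro j
    have hwj : w j = p j + q j := by rw [hq]; ring
    rw [hxα, hsα, hwj]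
    linear_combination (α * p j) * ha j + (α * q j) * hb j + (α^2 * p j * q j) * hab j
  have hpq0 : ∑ j, p j * q j = 0 := by
    have h := hperp p hpL
    calc ∑ j, p j * q j = ∑ j, (w j - p j) * p j := by
          apply Finset.sum_congr rfl; intro j _; rw [hq]; ring
      _ = 0 := h
  have hT : ∑ j, u j * Real.log (u j) = n * δ := by rw [hδ]; field_simp
  have hvw : ∑ j, v j * w j = -(n * μ) := by
    have h1 : ∀ j, v j * w j
        = -(x j * s j) + η * (δ * (x j * s j) - μ * (u j * Real.log (u j))) := by
      intro j
      have hxs : x j * s j = u j * μ := by rw [hu]; field_simp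
      rw [hw]
      linear_combination (-1 + η * δ - η * Real.log (u j)) * hvsq j
        + (-(η * Real.log (u j))) * hxs
    calc ∑ j, v j * w j
        = ∑ j, (-(x j * s j) + η * (δ * (x j * s j) - μ * (u j * Real.log (u j)))) :=
          Finset.sum_congr rfl (fun j _ => h1 j)
      _ = -(∑ j, x j * s j) + η * (δ * (∑ j, x j * s j)
            - μ * (∑ j, u j * Real.log (u j))) := by
          simp only [Finset.sum_add_distrib, Finset.sum_sub_distrib,
            Finset.sum_neg_distrib, ← Finset.mul_sum]
      _ = -(n * μ) := by rw [hS, hT]; ring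
  calc ∑ j, xα j * sα j
      = ∑ j, (x j * s j + α * (v j * w j) + α^2 * (p j * q j)) :=
        Finset.sum_congr rfl (fun j _ => key j)
    _ = (∑ j, x j * s j) + α * (∑ j, v j * w j) + α^2 * (∑ j, p j * q j) := by
        rw [Finset.sum_add_distrib, Finset.sum_add_distrib, ← Finset.mul_sum, ← Finset.mul_sum]
    _ = (1 - α) * n * μ := by rw [hS, hvw, hpq0]; ring
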